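/- Let O5 be the set of projective points of PG(3,q) outside O1 ∪ O2 ∪ O3 ∪ O4, where O1 = {[1, f(x,y), x, y] : x, y ∈ F}, O2 = {[0, x, 1, y] : x, y ∈ F}, O3 = {[0, x, 0, 1] : x ∈ F}, O4 = {[0,1,0,0]}. Then O5 is the orbit of [1,1,0,0] under G, the action of G on O5 is regular (free and transitive), and |O5| = q^2·(q − 1). -/

import Mathlib

open Matrix

noncomputable section

abbrev F (n : ℕ) : Type := GaloisField 2 (2 * n + 1)

def om (n : ℕ) : ℕ := 2 ^ (n + 1)

def ff (n : ℕ) (x y : F n) : F n := x ^ (om n + 2) + x * y + y ^ om n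

def Mmat (n : ℕ) (r a b : F n) : Matrix (Fin 4) (Fin 4) (F n) :=
  !![1, ff n a b, a, b;
     0, r ^ (om n + 2), 0, 0;
     0, (a ^ (om n + 1) + b) * r, r, a ^ om n * r;
     0, a * r ^ (om n + 1), 0, r ^ (om n + 1)]

/-- The four spanning vectors of the polar line `π[x]`. -/
def polarGens (n : ℕ) (x : Fin 4 → F n) : Set (Fin 4 → F n) :=
  {![0, (x 0 * x 1 + x 2 * x 3) ^ 2 ^ n, x 0 ^ om n, x 2 ^ om n],
   ![(x 0 * x 1 + x 2 * x 3) ^ 2 ^ n, 0, x 3 ^ om n, x 1 ^ om n],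
   ![x 0 ^ om n, x 3 ^ om n, 0, (x 0 * x 1 + x 2 * x 3) ^ 2 ^ n],
   ![x 2 ^ om n, x 1 ^ om n, (x 0 * x 1 + x 2 * x 3) ^ 2 ^ n, 0]}

/-- The polar line `π[x]`, as a subspace of `F⁴`. -/
def polarSpan (n : ℕ) (x : Fin 4 → F n) : Submodule (F n) (Fin 4 → F n) :=
  Submodule.span (F n) (polarGens n x)

/-- The point set of `PG(3,q)`. -/
abbrev PG3 (n : ℕ) : Type := Projectivization (F n) (Fin 4 → F n)

/-- The graph `A(q)`: projective points of `PG(3,q)`, with `[x]` adjacent to `[y]`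
iff `[x] ≠ [y]` and `y ∈ π[x]` (equivalently, `x ∈ π[y]`, the relation being
symmetric).  Membership `y ∈ π[x]` does not depend on the choice of
representatives, so it is tested on the canonical representatives. -/
def Aq (n : ℕ) : SimpleGraph (PG3 n) where
  Adj P Q := P ≠ Q ∧ Q.rep ∈ polarSpan n P.rep ∧ P.rep ∈ polarSpan n Q.rep
  symm := ⟨fun _ _ h => ⟨h.1.symm, h.2.2, h.2.1⟩⟩
  loopless := ⟨fun _ h => h.1 rfl⟩

/-- A vector with a coordinate equal to `1` is nonzero. -/
lemma vne {n : ℕ} (v : Fin 4 → F n) (i : Fin 4) (h : v i = 1) : v ≠ 0 := by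
  intro h0; rw [h0] at h; simp at h

def O1set (n : ℕ) : Set (PG3 n) :=
  {P | ∃ x y : F n, P = Projectivization.mk (F n) ![1, ff n x y, x, y] (vne _ 0 (by simp))}

def O2set (n : ℕ) : Set (PG3 n) :=
  {P | ∃ x y : F n, P = Projectivization.mk (F n) ![0, x, 1, y] (vne _ 2 (by simp))}

def O3set (n : ℕ) : Set (PG3 n) :=
  {P | ∃ x : F n, P = Projectivization.mk (F n) ![0, x, 0, 1] (vne _ 3 (by simp))}

def O4set (n : ℕ) : Set (PG3 n) :=
  {Projectivization.mk (F n) ![0, 1, 0, 0] (vne _ 1 (by simp))}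

/-- `O5` : all projective points outside `O1 ∪ O2 ∪ O3 ∪ O4`. -/
def O5set (n : ℕ) : Set (PG3 n) :=
  Set.univ \ (O1set n ∪ O2set n ∪ O3set n ∪ O4set n)


namespace Suz

variable {n : ℕ}

lemma Fq_pow_card (n : ℕ) (x : F n) : x ^ (2:ℕ) ^ (2*n+1) = x := by
  haveI : Fintype (F n) := Fintype.ofFinite _
  have h : Fintype.card (F n) = 2 ^ (2*n+1) := by
    have := GaloisField.card 2 (2*n+1) (by omega)
    simpa [Nat.card_eq_fintype_card] using this
  rw [← h]; exact FiniteField.pow_card x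

lemma sigma_add (n : ℕ) (x y : F n) : (x + y) ^ om n = x ^ om n + y ^ om n :=
  add_pow_char_pow ..

lemma sigma_sigma (n : ℕ) (x : F n) : (x ^ om n) ^ om n = x ^ 2 := by
  rw [← pow_mul, om, ← pow_add]
  have h : (n+1) + (n+1) = (2*n+1) + 1 := by omega
  rw [h, pow_succ, pow_mul']
  rw [Fq_pow_card]

lemma two_eq_zero (n : ℕ) : (2 : F n) = 0 := by
  exact_mod_cast CharP.cast_eq_zero (F n) 2

lemma add_eq_zero_iff_eq (x y : F n) : x + y = 0 ↔ x = y := by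
  constructor
  · intro h; linear_combination h - y * (two_eq_zero n)
  · intro h; rw [h]; linear_combination y * (two_eq_zero n)

lemma add_ne_zero_iff_ne (x y : F n) : x + y ≠ 0 ↔ x ≠ y :=
  not_congr (add_eq_zero_iff_eq x y)

lemma coprime_om (n : ℕ) : Nat.Coprime (om n + 2) (2 ^ (2*n+1) - 1) := by
  obtain ⟨m, hm⟩ : ∃ m, 2^n = m + 1 := ⟨2^n - 1, by have := Nat.one_le_two_pow (n := n); omega⟩
  have eo : om n = 2 * 2^n := by rw [om]; ring
  have key : (om n + 2) * (2^n - 1) + 2 = 2^(2*n+1) := by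
    rw [eo, hm]
    have e : 2^(2*n+1) = 2 * (m+1) * (m+1) := by rw [← hm]; ring
    rw [e]; simp; ring
  have h : 2 ^ (2*n+1) - 1 = 1 + (om n + 2) * (2^n - 1) := by omega
  rw [h, Nat.coprime_add_mul_left_right]
  exact Nat.coprime_one_right _

lemma card_F (n : ℕ) : Nat.card (F n) = 2 ^ (2*n+1) := GaloisField.card 2 (2*n+1) (by omega)

lemma pow_om2_bij (n : ℕ) : Function.Bijective (fun x : F n => x ^ (om n + 2)) := by
  have hc : (Nat.card (F n)ˣ).Coprime (om n + 2) := by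
    rw [Nat.card_units, card_F]; exact (coprime_om n).symm
  have e := hc.pow_left_bijective
  constructor
  · intro x y hxy
    simp only at hxy
    rcases eq_or_ne y 0 with rfl | hy
    · rw [zero_pow (by omega)] at hxy
      exact pow_eq_zero_iff (by omega) |>.mp hxy
    · rcases eq_or_ne x 0 with rfl | hx
      · rw [zero_pow (by omega)] at hxy
        exact absurd hxy.symm (pow_ne_zero _ hy)
      · have := e.injective (a₁ := Units.mk0 x hx) (a₂ := Units.mk0 y hy) (by
          ext; simpa using hxy)
        simpa [Units.ext_iff] using this
  · intro c
    rcases eq_or_ne c 0 with rfl | hc0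
    · exact ⟨0, zero_pow (by omega)⟩
    · obtain ⟨u, hu⟩ := e.surjective (Units.mk0 c hc0)
      exact ⟨u, by simpa [Units.ext_iff] using congrArg Units.val hu⟩

lemma key_id (n : ℕ) (u c d r a b : F n) :
    ff n a b + u * r ^ (om n + 2) + c * ((a ^ (om n + 1) + b) * r) + d * (a * r ^ (om n + 1))
      = ff n (a + c*r) (b + c * a ^ om n * r + d * r ^ (om n + 1))
        + (u + ff n c d) * r ^ (om n + 2) := by
  have h2 := two_eq_zero n
  simp only [ff, pow_add, sigma_add, mul_pow, sigma_sigma, pow_one]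
  linear_combination (-(a^2*c^(om n)*r^(om n) + r^2*d^(om n)*r^(om n) + c*r*a*c^(om n)*r^(om n)
    + c*r*a*a^(om n) + c*d*r^2*r^(om n) + c^2*r^2*c^(om n)*r^(om n) + c^2*r^2*a^(om n))) * h2

lemma vecMul_M (n : ℕ) (u c d r a b : F n) :
    (![1, u, c, d] : Fin 4 → F n) ᵥ* Mmat n r a b
      = ![1, ff n a b + u * r ^ (om n + 2) + c * ((a ^ (om n + 1) + b) * r)
            + d * (a * r ^ (om n + 1)),
          a + c * r,
          b + c * (a ^ om n * r) + d * r ^ (om n + 1)] := by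
  funext i
  fin_cases i <;>
    simp [Mmat, Matrix.vecMul, dotProduct, Fin.sum_univ_four, Matrix.vecHead,
      Matrix.vecTail] <;> ring

lemma vecMul_M_one (n : ℕ) (r a b : F n) :
    (![1, 1, 0, 0] : Fin 4 → F n) ᵥ* Mmat n r a b
      = ![1, ff n a b + r ^ (om n + 2), a, b] := by
  rw [vecMul_M]
  funext i; fin_cases i <;> simp

/-- normalized vectors are distinguished by their coordinates -/
lemma mk_nvec_inj {u c d u' c' d' : F n}
    (h : Projectivization.mk (F n) ![1,u,c,d] (vne _ 0 (by simp))
       = Projectivization.mk (F n) ![1,u',c',d'] (vne _ 0 (by simp))) :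
    u = u' ∧ c = c' ∧ d = d' := by
  rw [Projectivization.mk_eq_mk_iff'] at h
  obtain ⟨t, ht⟩ := h
  have h0 := congrFun ht 0
  have h1 := congrFun ht 1
  have h2 := congrFun ht 2
  have h3 := congrFun ht 3
  simp at h0 h1 h2 h3
  subst h0; simp at h1 h2 h3; exact ⟨h1.symm, h2.symm, h3.symm⟩

lemma mem_O5_iff (P : PG3 n) :
    P ∈ O5set n ↔ ∃ u c d : F n, u ≠ ff n c d ∧
      P = Projectivization.mk (F n) ![1,u,c,d] (vne _ 0 (by simp)) := by
  constructor
  · intro hP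
    rw [O5set, Set.mem_diff] at hP
    obtain ⟨-, hP⟩ := hP
    simp only [Set.mem_union, not_or] at hP
    obtain ⟨⟨⟨h1, h2⟩, h3⟩, h4⟩ := hP
    set v := P.rep with hv
    have hvne : v ≠ 0 := P.rep_nonzero
    have hPmk : P = Projectivization.mk (F n) v hvne := (Projectivization.mk_rep P).symm
    rcases eq_or_ne (v 0) 0 with hv0 | hv0
    · exfalso
      rcases eq_or_ne (v 2) 0 with hv2 | hv2
      · rcases eq_or_ne (v 3) 0 with hv3 | hv3
        · -- v = (0, v1, 0, 0), v1 ≠ 0 : O4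
          have hv1 : v 1 ≠ 0 := by
            intro hv1
            apply hvne; funext i; fin_cases i <;> assumption
          apply h4
          rw [O4set, Set.mem_singleton_iff, hPmk,
            Projectivization.mk_eq_mk_iff']
          exact ⟨v 1, by funext i; fin_cases i <;> simp [hv0, hv1, hv2, hv3]⟩
        · apply h3
          refine ⟨v 1 / v 3, ?_⟩
          rw [hPmk, Projectivization.mk_eq_mk_iff']
          refine ⟨v 3, ?_⟩
          funext i; fin_cases i <;> field_simp <;> first | rfl | simp [hv0, hv2, hv3]
          all_goals (rw [mul_div_assoc']; exact mul_div_cancel_left₀ _ hv3)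
      · apply h2
        refine ⟨v 1 / v 2, v 3 / v 2, ?_⟩
        rw [hPmk, Projectivization.mk_eq_mk_iff']
        refine ⟨v 2, ?_⟩
        funext i; fin_cases i <;> field_simp <;> first | rfl | simp [hv0, mul_comm, hv2]
        all_goals (rw [mul_div_assoc']; exact mul_div_cancel_left₀ _ hv2)
    · refine ⟨v 1 / v 0, v 2 / v 0, v 3 / v 0, ?_, ?_⟩
      · intro heq
        apply h1
        refine ⟨v 2 / v 0, v 3 / v 0, ?_⟩
        rw [hPmk, Projectivization.mk_eq_mk_iff']
        refine ⟨v 0, ?_⟩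
        rw [← heq]
        funext i; fin_cases i <;> field_simp <;> try rfl
        all_goals simp [hv0]
        all_goals (rw [mul_div_assoc']; exact mul_div_cancel_left₀ _ hv0)
      · rw [hPmk, Projectivization.mk_eq_mk_iff']
        refine ⟨v 0, ?_⟩
        funext i; fin_cases i <;> field_simp <;> try rfl
        all_goals simp [hv0]
        all_goals (rw [mul_div_assoc']; exact mul_div_cancel_left₀ _ hv0)
  · rintro ⟨u, c, d, hu, rfl⟩
    rw [O5set, Set.mem_diff]
    refine ⟨trivial, ?_⟩
    simp only [Set.mem_union, not_or]
    refine ⟨⟨⟨?_, ?_⟩, ?_⟩, ?_⟩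
    · rintro ⟨x, y, hxy⟩
      obtain ⟨e1, e2, e3⟩ := mk_nvec_inj hxy
      subst e2; subst e3; exact hu e1
    · rintro ⟨x, y, hxy⟩
      rw [Projectivization.mk_eq_mk_iff'] at hxy
      obtain ⟨t, ht⟩ := hxy
      simpa using congrFun ht 0
    · rintro ⟨x, hxy⟩
      rw [Projectivization.mk_eq_mk_iff'] at hxy
      obtain ⟨t, ht⟩ := hxy
      simpa using congrFun ht 0
    · intro hxy
      rw [O4set, Set.mem_singleton_iff, Projectivization.mk_eq_mk_iff'] at hxy
      obtain ⟨t, ht⟩ := hxy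
      simpa using congrFun ht 0

end Suz

open Suz Projectivization in

set_option maxHeartbeats 2000000 in
theorem O5_regular_orbit (n : ℕ) (hn : 1 ≤ n) :
    O5set n = {P : PG3 n | ∃ r a b : F n, r ≠ 0 ∧
        ∃ h : (![1, 1, 0, 0] : Fin 4 → F n) ᵥ* Mmat n r a b ≠ 0,
          P = Projectivization.mk (F n) ((![1, 1, 0, 0] : Fin 4 → F n) ᵥ* Mmat n r a b) h} ∧
    (∀ (x y : Fin 4 → F n) (hx : x ≠ 0) (hy : y ≠ 0),
      Projectivization.mk (F n) x hx ∈ O5set n →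
      Projectivization.mk (F n) y hy ∈ O5set n →
      ∃! A : Matrix (Fin 4) (Fin 4) (F n),
        (∃ r a b : F n, r ≠ 0 ∧ A = Mmat n r a b) ∧
        ∃ t : F n, t ≠ 0 ∧ x ᵥ* A = t • y) ∧
    Nat.card (O5set n) = (2 ^ (2 * n + 1)) ^ 2 * (2 ^ (2 * n + 1) - 1) := by
  have h2 := two_eq_zero n
  refine ⟨?_, ?_, ?_⟩
  · -- orbit description
    ext P
    rw [mem_O5_iff]
    constructor
    · rintro ⟨u, c, d, hu, rfl⟩
      obtain ⟨r, hr⟩ := (pow_om2_bij n).surjective (u + ff n c d)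
      simp only at hr
      have hr0 : r ≠ 0 := by
        intro h0
        rw [h0, zero_pow (by omega)] at hr
        exact (add_ne_zero_iff_ne u (ff n c d)).mpr hu hr.symm
      have hveq : (![1, 1, 0, 0] : Fin 4 → F n) ᵥ* Mmat n r c d = ![1, u, c, d] := by
        rw [vecMul_M_one, hr]
        have : ff n c d + (u + ff n c d) = u := by
          linear_combination (ff n c d) * h2
        rw [this]
      refine ⟨r, c, d, hr0, by rw [hveq]; exact vne _ 0 (by simp), ?_⟩
      rw [Projectivization.mk_eq_mk_iff']
      exact ⟨1, by rw [hveq, one_smul]⟩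
    · rintro ⟨r, a, b, hr0, hne, rfl⟩
      refine ⟨ff n a b + r ^ (om n + 2), a, b, ?_, ?_⟩
      · intro heq
        have : r ^ (om n + 2) = 0 := by linear_combination heq
        exact hr0 (pow_eq_zero_iff (by omega) |>.mp this)
      · rw [Projectivization.mk_eq_mk_iff']
        exact ⟨1, by rw [one_smul, vecMul_M_one]⟩
  · -- regularity
    intro x y hx hy hxm hym
    obtain ⟨u, c, d, hu, hxe⟩ := (mem_O5_iff _).1 hxm
    obtain ⟨v, e, g, hv, hye⟩ := (mem_O5_iff _).1 hym
    rw [Projectivization.mk_eq_mk_iff] at hxe hye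
    obtain ⟨s, hs⟩ := hxe
    obtain ⟨t0, ht0⟩ := hye
    have hU : u + ff n c d ≠ 0 := (add_ne_zero_iff_ne _ _).mpr hu
    have hV : v + ff n e g ≠ 0 := (add_ne_zero_iff_ne _ _).mpr hv
    obtain ⟨r, hr⟩ := (pow_om2_bij n).surjective ((v + ff n e g) * (u + ff n c d)⁻¹)
    simp only at hr
    have hr0 : r ≠ 0 := by
      intro h0
      rw [h0, zero_pow (by omega)] at hr
      exact (mul_ne_zero hV (inv_ne_zero hU)) hr.symm
    have hUr : (u + ff n c d) * r ^ (om n + 2) = v + ff n e g := by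
      rw [hr]; field_simp
    set a : F n := e + c * r with ha
    set b : F n := g + c * a ^ om n * r + d * r ^ (om n + 1) with hb
    have e1 : a + c * r = e := by rw [ha]; linear_combination (c * r) * h2
    have e2 : b + c * a ^ om n * r + d * r ^ (om n + 1) = g := by
      rw [hb]; linear_combination (c * a ^ om n * r + d * r ^ (om n + 1)) * h2
    have hmain : (![1, u, c, d] : Fin 4 → F n) ᵥ* Mmat n r a b = ![1, v, e, g] := by
      rw [vecMul_M]
      funext i; fin_cases i
      · rfl
      · show ff n a b + u * r ^ (om n + 2) + c * ((a ^ (om n + 1) + b) * r)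
            + d * (a * r ^ (om n + 1)) = v
        rw [key_id n u c d r a b, e1, e2, hUr]
        linear_combination (ff n e g) * h2
      · show a + c * r = e
        exact e1
      · show b + c * (a ^ om n * r) + d * r ^ (om n + 1) = g
        linear_combination e2
    refine ⟨Mmat n r a b, ⟨⟨r, a, b, hr0, rfl⟩, (s : F n) * (t0 : F n)⁻¹, ?_, ?_⟩, ?_⟩
    · exact mul_ne_zero (Units.ne_zero s) (inv_ne_zero (Units.ne_zero t0))
    · rw [← hs, Units.smul_def, Matrix.smul_vecMul, hmain, ← ht0, Units.smul_def, smul_smul]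
      rw [mul_assoc, inv_mul_cancel₀ (Units.ne_zero t0), mul_one]
    · rintro A' ⟨⟨r', a', b', hr0', rfl⟩, t', ht', hA'⟩
      -- derive nx ᵥ* M' = τ • ny with τ = 1
      have hA2 : (![1, u, c, d] : Fin 4 → F n) ᵥ* Mmat n r' a' b'
          = ((s : F n)⁻¹ * (t' * (t0 : F n))) • ![1, v, e, g] := by
        have := hA'
        rw [← hs, ← ht0, Units.smul_def, Matrix.smul_vecMul] at this
        have h' := congrArg (fun w => ((s : F n)⁻¹) • w) this
        simp only [smul_smul, Units.smul_def] at h' ⊢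
        rw [inv_mul_cancel₀ (Units.ne_zero s), one_smul] at h'
        exact h'
      rw [vecMul_M] at hA2
      have c0 := congrFun hA2 0
      have c1 := congrFun hA2 1
      have c2 := congrFun hA2 2
      have c3 := congrFun hA2 3
      simp at c0 c1 c2 c3
      rw [← c0, one_mul] at c1 c2 c3
      -- c2 : a' + c * r' = e, c3 : b' + c * (a'^om * r') + d * r'^(om+1) = g
      have c3' : b' + c * a' ^ om n * r' + d * r' ^ (om n + 1) = g := by
        linear_combination c3
      have hkey : (u + ff n c d) * r' ^ (om n + 2) = v + ff n e g := by
        have := key_id n u c d r' a' b'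
        rw [c2, c3'] at this
        rw [c1] at this
        linear_combination -this - (ff n e g) * h2
      have hrr : r' ^ (om n + 2) = r ^ (om n + 2) := by
        have := hUr.trans hkey.symm
        exact mul_left_cancel₀ hU this.symm
      have hr' : r' = r := (pow_om2_bij n).injective hrr
      subst hr'
      have ha' : a' = a := by
        have := c2.trans e1.symm
        linear_combination this + (c * r') * h2 - (c * r') * h2
      subst ha'
      have hb' : b' = b := by
        have := c3'.trans e2.symm
        linear_combination this
      subst hb'
      rfl
  · -- cardinality
    have hmem : ∀ (w : F n), w ≠ 0 → ∀ (c d : F n),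
        Projectivization.mk (F n) ![1, w + ff n c d, c, d] (vne _ 0 (by simp)) ∈ O5set n := by
      intro w hw c d
      rw [mem_O5_iff]
      refine ⟨w + ff n c d, c, d, ?_, rfl⟩
      intro h; exact hw (by linear_combination h)
    have key : Nat.card (O5set n) = Nat.card ({w : F n // w ≠ 0} × F n × F n) := by
      rw [eq_comm]
      refine Nat.card_eq_of_bijective
        (fun p => (⟨Projectivization.mk (F n) ![1, p.1.1 + ff n p.2.1 p.2.2, p.2.1, p.2.2]
          (vne _ 0 (by simp)), hmem p.1.1 p.1.2 p.2.1 p.2.2⟩ : O5set n)) ⟨?_, ?_⟩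
      · rintro ⟨⟨w, hw⟩, c, d⟩ ⟨⟨w', hw'⟩, c', d'⟩ hpq
        simp only [Subtype.mk.injEq] at hpq
        obtain ⟨h1, h2', h3⟩ := mk_nvec_inj hpq
        subst h2'; subst h3
        have hww : w = w' := by linear_combination h1
        simp [hww]
      · rintro ⟨P, hP⟩
        obtain ⟨u, c, d, hu, rfl⟩ := (mem_O5_iff P).1 hP
        refine ⟨⟨⟨u + ff n c d, (add_ne_zero_iff_ne _ _).mpr hu⟩, c, d⟩, ?_⟩
        apply Subtype.ext
        simp only
        rw [Projectivization.mk_eq_mk_iff']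
        refine ⟨1, ?_⟩
        rw [one_smul]
        have hcan : u + ff n c d + ff n c d = u := by linear_combination (ff n c d) * h2
        rw [hcan]
    calc Nat.card (O5set n) = Nat.card ({w : F n // w ≠ 0} × F n × F n) := key
      _ = Nat.card {w : F n // w ≠ 0} * (Nat.card (F n) * Nat.card (F n)) := by
          rw [Nat.card_prod, Nat.card_prod]
      _ = (2 ^ (2 * n + 1) - 1) * (2 ^ (2 * n + 1) * 2 ^ (2 * n + 1)) := by
          rw [Nat.card_congr unitsEquivNeZero.symm, Nat.card_units, card_F]
      _ = (2 ^ (2 * n + 1)) ^ 2 * (2 ^ (2 * n + 1) - 1) := by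
          rw [sq]; exact Nat.mul_comm _ _
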